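/- Let M ≥ 1 and let χ̃ ∈ W_M^+ with χ̃(−1) = −1. Then χ̃(t) ≤ −(−t)^M for every −1 ≤ t ≤ 0, and χ̃(t) ≤ t for every t ≤ −1. -/

import Mathlib

open MeasureTheory Filter Set
open scoped Topology

noncomputable section

/-- The class `W_M^+` of concave, increasing weights `χ : (-∞,0] → (-∞,0]` with
`χ(0) = 0`, `χ < 0` on `(-∞,0)`, and `|t·χ'(t)| ≤ M·|χ(t)|` at every point `t < 0`
where `χ` is differentiable. -/
def WMPlus (M : ℝ) (χ : ℝ → ℝ) : Prop :=
  ConcaveOn ℝ (Set.Iic 0) χ ∧ StrictMonoOn χ (Set.Iic 0) ∧ (∀ t ≤ (0:ℝ), χ t ≤ 0) ∧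
    χ 0 = 0 ∧ (∀ t < (0:ℝ), χ t < 0) ∧
    ∀ t < (0:ℝ), ∀ d : ℝ, HasDerivAt χ d t → |t * d| ≤ M * |χ t|

theorem stmt10 (M : ℝ) (hM : 1 ≤ M) (χt : ℝ → ℝ) (hχt : WMPlus M χt)
    (hnorm : χt (-1) = -1) :
    (∀ t : ℝ, -1 ≤ t → t ≤ 0 → χt t ≤ -((-t) ^ M)) ∧
    (∀ t : ℝ, t ≤ -1 → χt t ≤ t) := by
  obtain ⟨hconc, hmono, hnonpos, h0, hneg, hderiv⟩ := hχt
  have hM0 : (0:ℝ) < M := lt_of_lt_of_le zero_lt_one hM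
  -- Part 2 : χ t ≤ t for t ≤ -1
  have part2 : ∀ t : ℝ, t ≤ -1 → χt t ≤ t := by
    intro t ht
    rcases eq_or_lt_of_le ht with rfl | ht'
    · exact hnorm.le
    · have h1 : t < 0 := ht'.trans (by norm_num)
      have ht0 : t ≠ 0 := h1.ne
      have ha : (0:ℝ) ≤ (-1)/t := by rw [div_nonneg_iff]; right; constructor <;> linarith
      have hb : (0:ℝ) ≤ (t+1)/t := by rw [div_nonneg_iff]; right; constructor <;> linarith
      have hab : (-1)/t + (t+1)/t = 1 := by field_simp; ring
      have key := hconc.2 (mem_Iic.mpr h1.le) (mem_Iic.mpr le_rfl) ha hb hab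
      simp only [smul_eq_mul, mul_zero, h0, add_zero] at key
      have hat : (-1)/t * t = -1 := div_mul_cancel₀ _ ht0
      rw [hat, hnorm] at key
      -- key : (-1)/t * χt t ≤ -1
      have hpos : (0:ℝ) < -t := by linarith
      have h2 := mul_le_mul_of_nonneg_right key hpos.le
      have h3 : (-1)/t * χt t * (-t) = χt t := by field_simp
      rw [h3] at h2
      linarith
  -- chord lower bound: x ≤ χt x on [-1, 0]
  have chord : ∀ x ∈ Icc (-1:ℝ) 0, x ≤ χt x := by
    intro x hx
    have ha : (0:ℝ) ≤ -x := by linarith [hx.2]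
    have hb : (0:ℝ) ≤ 1 + x := by linarith [hx.1]
    have hab : -x + (1 + x) = 1 := by ring
    have key := hconc.2 (show (-1:ℝ) ∈ Iic (0:ℝ) by norm_num)
      (show (0:ℝ) ∈ Iic (0:ℝ) by norm_num) ha hb hab
    rw [smul_eq_mul, smul_eq_mul, smul_eq_mul, smul_eq_mul, hnorm, h0] at key
    have h1 : -x * (-1:ℝ) + (1+x) * 0 = x := by ring
    rw [h1] at key
    linarith
  -- continuity on Iio 0
  have hconcIio : ConcaveOn ℝ (Iio (0:ℝ)) χt := hconc.subset Iio_subset_Iic_self (convex_Iio _)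
  have hcontIio : ContinuousOn χt (Iio (0:ℝ)) := by
    have := hconcIio.continuousOn_interior
    rwa [interior_Iio] at this
  have hcontAt : ∀ x : ℝ, x < 0 → ContinuousAt χt x := fun x hx =>
    hcontIio.continuousAt (Iio_mem_nhds hx)
  -- continuity on Icc (-1) 0
  have hcont : ContinuousOn χt (Icc (-1:ℝ) 0) := by
    intro x hx
    rcases lt_or_eq_of_le hx.2 with hx0 | rfl
    · exact (hcontAt x hx0).continuousWithinAt
    · -- continuity at 0 within Icc by squeeze
      rw [ContinuousWithinAt, h0]
      have hid : Tendsto (fun y : ℝ => y) (𝓝[Icc (-1:ℝ) 0] 0) (𝓝 0) :=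
        tendsto_id.mono_left nhdsWithin_le_nhds
      refine tendsto_of_tendsto_of_tendsto_of_le_of_le' hid tendsto_const_nhds ?_ ?_
      · filter_upwards [self_mem_nhdsWithin] with y hy using chord y hy
      · filter_upwards [self_mem_nhdsWithin] with y hy using hnonpos y hy.2
  -- the monotone extension ψ
  set ψ : ℝ → ℝ := fun t => χt (min t 0) with hψ
  have hψmono : Monotone ψ := by
    intro a b hab
    exact (hmono.monotoneOn) (mem_Iic.mpr (min_le_right _ _)) (mem_Iic.mpr (min_le_right _ _))
      (min_le_min hab le_rfl)
  -- derivative bound at differentiability points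
  have hdiffpt : ∀ u : ℝ, u < 0 → DifferentiableAt ℝ ψ u →
      HasDerivAt χt (deriv ψ u) u ∧ deriv ψ u ≤ M * χt u / u := by
    intro u hu hdiff
    have hev : χt =ᶠ[𝓝 u] ψ := by
      filter_upwards [Iio_mem_nhds hu] with t ht
      simp [hψ, min_eq_left (le_of_lt (mem_Iio.mp ht))]
    have hd : HasDerivAt χt (deriv ψ u) u := hdiff.hasDerivAt.congr_of_eventuallyEq hev
    refine ⟨hd, ?_⟩
    have hb := hderiv u hu _ hd
    have hχu : χt u < 0 := hneg u hu
    rw [abs_of_neg hχu] at hb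
    have h1 : -(u * deriv ψ u) ≤ M * (-χt u) := (neg_le_abs _).trans hb
    rw [le_div_iff_of_neg hu]
    nlinarith
  -- density of differentiability points
  have hae : ∀ᵐ u, DifferentiableAt ℝ ψ u := hψmono.ae_differentiableAt
  have hdense : ∀ x δ : ℝ, 0 < δ → ∃ u ∈ Ioo (x - δ) x, DifferentiableAt ℝ ψ u := by
    intro x δ hδ
    by_contra h
    push_neg at h
    have hsub : Ioo (x - δ) x ⊆ {u | ¬ DifferentiableAt ℝ ψ u} := fun u hu => h u hu
    have h0' : volume (Ioo (x - δ) x) = 0 :=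
      measure_mono_null hsub (by rw [← ae_iff] at *; exact hae)
    rw [Real.volume_Ioo] at h0'
    have : x - (x - δ) = δ := by ring
    rw [this] at h0'
    exact absurd h0' (by simp [ENNReal.ofReal_eq_zero, not_le, hδ])
  -- negated function is convex (for secant monotonicity)
  have hconv : ConvexOn ℝ (Iic (0:ℝ)) (-χt) := hconc.neg
  -- main fencing estimate for every p > M
  have main : ∀ p : ℝ, M < p → ∀ x ∈ Icc (-1:ℝ) 0, χt x ≤ -((-x) ^ p) := by
    intro p hp
    have hp1 : (1:ℝ) ≤ p := hM.trans hp.le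
    have hp0 : (0:ℝ) < p := lt_of_lt_of_le zero_lt_one hp1
    have hB : ContinuousOn (fun x : ℝ => -((-x) ^ p)) (Icc (-1:ℝ) 0) := by
      apply ContinuousOn.neg
      exact (continuous_neg.continuousOn).rpow_const (fun x _ => Or.inr hp0.le)
    have hB' : ∀ x ∈ Ico (-1:ℝ) 0,
        HasDerivWithinAt (fun x : ℝ => -((-x) ^ p)) (p * (-x) ^ (p - 1)) (Ici x) x := by
      intro x hx
      have hx0 : x < 0 := hx.2
      have h1 : HasDerivAt (fun y : ℝ => (-y) ^ p) (-1 * p * (-x) ^ (p - 1)) x :=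
        (hasDerivAt_neg x).rpow_const (Or.inl (show -x ≠ 0 from (neg_pos.mpr hx0).ne'))
      have h2 : HasDerivAt (fun y : ℝ => -((-y) ^ p)) (p * (-x) ^ (p - 1)) x := by
        have : HasDerivAt (fun y : ℝ => -((-y) ^ p)) (-(-1 * p * (-x) ^ (p - 1))) x := h1.neg
        convert this using 1
        ring
      exact h2.hasDerivWithinAt
    have ha : χt (-1) ≤ -((-(-1:ℝ)) ^ p) := by
      rw [hnorm]
      norm_num [Real.one_rpow]
    have bound : ∀ x ∈ Ico (-1:ℝ) 0, χt x = -((-x) ^ p) →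
        M * χt x / x < p * (-x) ^ (p - 1) := by
      intro x hx hEq
      have hx0 : x < 0 := hx.2
      have hnx : (0:ℝ) < -x := by linarith
      have hsplit : (-x) ^ p = (-x) ^ (p - 1) * (-x) := by
        rw [← Real.rpow_add_one hnx.ne']
        ring_nf
      have hpow : (0:ℝ) < (-x) ^ (p - 1) := Real.rpow_pos_of_pos hnx _
      rw [hEq, hsplit]
      have hxne : x ≠ 0 := hx0.ne
      have : M * -((-x) ^ (p - 1) * -x) / x = M * (-x) ^ (p - 1) := by
        field_simp
      rw [this]
      exact (mul_lt_mul_of_pos_right hp hpow)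
    have hf' : ∀ x ∈ Ico (-1:ℝ) 0, ∀ r, M * χt x / x < r →
        ∃ᶠ z in 𝓝[>] x, slope χt x z < r := by
      intro x hx r hr
      have hx0 : x < 0 := hx.2
      have hcx : ContinuousAt (fun u : ℝ => M * χt u / u) x := by
        exact (continuousAt_const.mul (hcontAt x hx0)).div continuousAt_id hx0.ne
      have hev1 : ∀ᶠ u in 𝓝 x, M * χt u / u < r := hcx.eventually_lt_const hr
      have hev2 : ∀ᶠ u in 𝓝 x, u < 0 := eventually_lt_nhds hx0
      obtain ⟨δ, hδpos, hball⟩ := Metric.eventually_nhds_iff.mp (hev1.and hev2)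
      obtain ⟨u, hu1, hu2⟩ := hdense x δ hδpos
      have hux : u < x := hu1.2
      have hudist : dist u x < δ := by
        rw [Real.dist_eq, abs_lt]
        constructor <;> [linarith [hu1.1]; linarith [hu1.2]]
      obtain ⟨hur, hu0⟩ := hball hudist
      obtain ⟨hd, hdle⟩ := hdiffpt u hu0 hu2
      set d := deriv ψ u with hdd
      have hdr : d < r := lt_of_le_of_lt hdle hur
      -- tangent/chord comparisons
      have htan : slope χt u x ≤ d := by
        have htend : Tendsto (slope χt u) (𝓝[>] u) (𝓝 d) :=
          ((hasDerivAt_iff_tendsto_slope.mp hd).mono_left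
            (nhdsWithin_mono _ (fun w hw => ne_of_gt hw)))
        refine ge_of_tendsto htend ?_
        filter_upwards [Ioo_mem_nhdsGT_of_mem (left_mem_Ico.mpr hux)] with w hw
        have hwu : u < w := hw.1
        have hsec := hconv.secant_mono (mem_Iic.mpr hu0.le)
          (mem_Iic.mpr (hw.2.trans hx0).le) (mem_Iic.mpr hx0.le)
          hwu.ne' hux.ne' hw.2.le
        simp only [Pi.neg_apply] at hsec
        rw [slope_def_field, slope_def_field]
        have h1 : (-χt w - -χt u) / (w - u) ≤ (-χt x - -χt u) / (x - u) := hsec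
        have hwu0 : (0:ℝ) < w - u := by linarith [hw.1]
        have hxu0 : (0:ℝ) < x - u := by linarith
        rw [div_le_div_iff₀ hwu0 hxu0] at h1
        rw [div_le_div_iff₀ hxu0 hwu0]
        nlinarith [h1]
      have hev : ∀ᶠ z in 𝓝[>] x, slope χt x z < r := by
        filter_upwards [Ioo_mem_nhdsGT_of_mem (left_mem_Ico.mpr hx0)] with z hz
        have hxz : x < z := hz.1
        have hz0 : z < 0 := hz.2
        have hadj := hconc.slope_anti_adjacent (mem_Iic.mpr hu0.le) (mem_Iic.mpr hz0.le) hux hxz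
        rw [slope_def_field]
        calc (χt z - χt x) / (z - x) ≤ (χt x - χt u) / (x - u) := hadj
        _ = slope χt u x := (slope_def_field _ _ _).symm
        _ ≤ d := htan
        _ < r := hdr
      exact hev.frequently
    have := image_le_of_liminf_slope_right_lt_deriv_boundary' hcont hf' ha hB hB' bound
    exact fun x hx => this hx
  constructor
  · intro t ht1 ht2
    rcases lt_or_eq_of_le ht2 with ht0 | rfl
    · have hnt : (0:ℝ) < -t := by linarith
      have htend : Tendsto (fun p : ℝ => -((-t) ^ p)) (𝓝[>] M) (𝓝 (-((-t) ^ M))) :=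
        ((Real.continuousAt_const_rpow hnt.ne').neg).continuousWithinAt.tendsto
      refine ge_of_tendsto htend ?_
      filter_upwards [self_mem_nhdsWithin] with p hp
      exact main p hp t ⟨ht1, ht2⟩
    · rw [h0]
      norm_num [Real.zero_rpow hM0.ne']
  · exact part2
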